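/- arXiv:1601.01533 — 2 statements merged into one kernel-verified Lean document; each statement's English description precedes it below -/
import Mathlib

section
/- Let ψ : 𝔻 → Ω be a conformal homeomorphism from the unit disc onto a planar domain Ω, let α > 2, and suppose ∬_𝔻 |ψ'(u,v)|^α du dv < ∞. Let r ≥ α/(α−2) and set s = ((α−2)/α)·r. Then for every measurable f : Ω → ℝ with ∬_Ω |f|^r J_φ dxdy < ∞ (where φ = ψ^{-1} and J_φ = |φ'|² is its Jacobian), one has ‖f‖_{L^s(Ω)} ≤ (∬_𝔻 |ψ'|^α dudv)^{(2/α)(1/s)} · (∬_Ω |f|^r J_φ dxdy)^{1/r}. -/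
open MeasureTheory Metric Set

lemma aux_abs_det (z : ℂ) :
    |((((1 : ℂ →L[ℂ] ℂ).smulRight z).restrictScalars ℝ)).det| = ‖z‖ ^ 2 := by
  have h1 : ((((1 : ℂ →L[ℂ] ℂ).smulRight z).restrictScalars ℝ : ℂ →L[ℝ] ℂ) : ℂ →ₗ[ℝ] ℂ)
      = Algebra.lmul ℝ ℂ z := by
    apply LinearMap.ext
    intro w
    simp [mul_comm]
  have h2 : ((((1 : ℂ →L[ℂ] ℂ).smulRight z).restrictScalars ℝ)).det = Complex.normSq z := by
    show LinearMap.det _ = _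
    rw [h1, ← Algebra.norm_complex_apply, Algebra.norm_apply]
  rw [h2, abs_of_nonneg (Complex.normSq_nonneg z), ← Complex.sq_norm]

lemma aux_cov {s : Set ℂ} (hs : MeasurableSet s) {ψ : ℂ → ℂ}
    (h : ∀ w ∈ s, HasDerivAt ψ (deriv ψ w) w) (hinj : Set.InjOn ψ s) (g : ℂ → ℝ) :
    ∫ x in ψ '' s, g x = ∫ w in s, ‖deriv ψ w‖ ^ 2 * g (ψ w) := by
  have hd : ∀ w ∈ s, HasFDerivWithinAt ψ
      (((1 : ℂ →L[ℂ] ℂ).smulRight (deriv ψ w)).restrictScalars ℝ) s w := fun w hw =>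
    (((h w hw).hasFDerivAt).restrictScalars ℝ).hasFDerivWithinAt
  rw [integral_image_eq_integral_abs_det_fderiv_smul volume hs hd hinj g]
  refine setIntegral_congr_fun hs fun w _ => ?_
  rw [smul_eq_mul, aux_abs_det]

lemma aux_cov_int {s : Set ℂ} (hs : MeasurableSet s) {ψ : ℂ → ℂ}
    (h : ∀ w ∈ s, HasDerivAt ψ (deriv ψ w) w) (hinj : Set.InjOn ψ s) (g : ℂ → ℝ)
    (hg : IntegrableOn g (ψ '' s)) :
    IntegrableOn (fun w => ‖deriv ψ w‖ ^ 2 * g (ψ w)) s := by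
  have hd : ∀ w ∈ s, HasFDerivWithinAt ψ
      (((1 : ℂ →L[ℂ] ℂ).smulRight (deriv ψ w)).restrictScalars ℝ) s w := fun w hw =>
    (((h w hw).hasFDerivAt).restrictScalars ℝ).hasFDerivWithinAt
  have h2 := (integrableOn_image_iff_integrableOn_abs_det_fderiv_smul volume hs hd hinj g).1 hg
  refine h2.congr_fun (fun w _ => ?_) hs
  beta_reduce
  rw [smul_eq_mul, aux_abs_det]

/-- Weighted–to–unweighted embedding in a conformal α-regular domain
(Lemma 3.3): with s = ((α−2)/α)·r,
‖f‖_{L^s(Ω)} ≤ (∬_𝔻 |ψ'|^α)^{(2/α)(1/s)} · ‖f‖_{L^r(Ω,h)} where h = J_φ = |φ'|²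
and φ = ψ⁻¹ : Ω → 𝔻 is conformal. -/
theorem stmt3 (Ω : Set ℂ) (ψ φ : ℂ → ℂ)
    (hψd : DifferentiableOn ℂ ψ (ball (0:ℂ) 1))
    (hψbij : Set.BijOn ψ (ball (0:ℂ) 1) Ω)
    (hφd : DifferentiableOn ℂ φ Ω)
    (hinv : Set.InvOn φ ψ (ball (0:ℂ) 1) Ω)
    (α : ℝ) (hα : 2 < α)
    (hψα : IntegrableOn (fun w => ‖deriv ψ w‖ ^ α) (ball (0:ℂ) 1))
    (r s : ℝ) (hr : α / (α - 2) ≤ r) (hs : s = (α - 2) / α * r)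
    (f : ℂ → ℝ) (hfm : Measurable f)
    (hfw : IntegrableOn (fun x => |f x| ^ r * ‖deriv φ x‖ ^ 2) Ω) :
    (∫ x in Ω, |f x| ^ s) ^ (1 / s) ≤
      (∫ w in ball (0:ℂ) 1, ‖deriv ψ w‖ ^ α) ^ (2 / α * (1 / s)) *
        (∫ x in Ω, |f x| ^ r * ‖deriv φ x‖ ^ 2) ^ (1 / r) := by
  have hα0 : (0:ℝ) < α := by linarith
  have hα2 : (0:ℝ) < α - 2 := by linarith
  have hr1 : 1 < r := lt_of_lt_of_le ((one_lt_div hα2).2 (by linarith)) hr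
  have hrpos : (0:ℝ) < r := by linarith
  have hspos : (0:ℝ) < s := by rw [hs]; positivity
  have hsne : s ≠ 0 := ne_of_gt hspos
  -- Ω is open
  have hΩeq : ψ '' (ball (0:ℂ) 1) = Ω := hψbij.image_eq
  have hψa : AnalyticOnNhd ℂ ψ (ball (0:ℂ) 1) := hψd.analyticOnNhd isOpen_ball
  have hΩopen : IsOpen Ω := by
    rcases hψa.is_constant_or_isOpen (convex_ball (0:ℂ) 1).isPreconnected with ⟨w, hw⟩ | hopen
    · exfalso
      have h0 : (0:ℂ) ∈ ball (0:ℂ) 1 := mem_ball_self one_pos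
      have h12 : (1/2 : ℂ) ∈ ball (0:ℂ) 1 := by
        simp only [mem_ball, dist_zero_right]
        norm_num
      have := hψbij.injOn h0 h12 (by rw [hw 0 h0, hw _ h12])
      norm_num at this
    · rw [← hΩeq]
      exact hopen _ subset_rfl isOpen_ball
  -- derivatives
  have hψder : ∀ w ∈ ball (0:ℂ) 1, HasDerivAt ψ (deriv ψ w) w := fun w hw =>
    (hψd.differentiableAt (isOpen_ball.mem_nhds hw)).hasDerivAt
  have hφder : ∀ x ∈ Ω, HasDerivAt φ (deriv φ x) x := fun x hx =>
    (hφd.differentiableAt (hΩopen.mem_nhds hx)).hasDerivAt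
  have hkey : ∀ w ∈ ball (0:ℂ) 1, ‖deriv φ (ψ w)‖ * ‖deriv ψ w‖ = 1 := by
    intro w hw
    have hmem : ψ w ∈ Ω := hψbij.mapsTo hw
    have h1 : HasDerivAt (φ ∘ ψ) (deriv φ (ψ w) * deriv ψ w) w :=
      (hφder _ hmem).comp w (hψder w hw)
    have heq : (φ ∘ ψ) =ᶠ[nhds w] id := by
      filter_upwards [isOpen_ball.mem_nhds hw] with z hz
      exact hinv.1 hz
    have h2 : HasDerivAt (φ ∘ ψ) 1 w := (hasDerivAt_id w).congr_of_eventuallyEq heq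
    have h3 : deriv φ (ψ w) * deriv ψ w = 1 := h1.unique h2
    rw [← norm_mul, h3, norm_one]
  -- change of variables
  have eq1 : ∫ x in Ω, |f x| ^ s
      = ∫ w in ball (0:ℂ) 1, ‖deriv ψ w‖ ^ 2 * |f (ψ w)| ^ s := by
    rw [← hΩeq]
    exact aux_cov measurableSet_ball hψder hψbij.injOn _
  have eq2 : ∫ x in Ω, |f x| ^ r * ‖deriv φ x‖ ^ 2
      = ∫ w in ball (0:ℂ) 1, |f (ψ w)| ^ r := by
    rw [← hΩeq, aux_cov measurableSet_ball hψder hψbij.injOn _]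
    refine setIntegral_congr_fun measurableSet_ball fun w hw => ?_
    have h1 : ‖deriv ψ w‖ ^ 2 * (|f (ψ w)| ^ r * ‖deriv φ (ψ w)‖ ^ 2)
        = |f (ψ w)| ^ r * (‖deriv φ (ψ w)‖ * ‖deriv ψ w‖) ^ 2 := by ring
    rw [h1, hkey w hw]
    simp
  -- integrability of |f ∘ ψ| ^ r on the disc
  have hInt2 : IntegrableOn (fun w => |f (ψ w)| ^ r) (ball (0:ℂ) 1) := by
    have h2 := aux_cov_int measurableSet_ball hψder hψbij.injOn _ (hΩeq ▸ hfw)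
    refine h2.congr_fun (fun w hw => ?_) measurableSet_ball
    have h1 : ‖deriv ψ w‖ ^ 2 * (|f (ψ w)| ^ r * ‖deriv φ (ψ w)‖ ^ 2)
        = |f (ψ w)| ^ r * (‖deriv φ (ψ w)‖ * ‖deriv ψ w‖) ^ 2 := by ring
    beta_reduce
    rw [h1, hkey w hw]
    simp
  -- Hölder setup
  set p : ℝ := r / s with hp
  set q : ℝ := α / 2 with hq
  have hpval : p = α / (α - 2) := by
    rw [hp, hs]
    field_simp
  have hppos : (0:ℝ) < p := by rw [hpval]; positivity
  have hqpos : (0:ℝ) < q := by rw [hq]; positivity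
  have hpq : p.HolderConjugate q := by
    rw [Real.holderConjugate_iff]
    constructor
    · rw [hpval]
      exact (one_lt_div hα2).2 (by linarith)
    · rw [hpval, hq]
      field_simp
      ring
  set μ : Measure ℂ := volume.restrict (ball (0:ℂ) 1) with hμ
  have hψm : AEMeasurable ψ μ := hψd.continuousOn.aemeasurable measurableSet_ball
  set a : ℂ → ℝ := fun w => |f (ψ w)| ^ s with ha
  set b : ℂ → ℝ := fun w => ‖deriv ψ w‖ ^ 2 with hb
  have ham : AEMeasurable a μ := ((hfm.abs.comp_aemeasurable hψm)).pow aemeasurable_const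
  have hbm : Measurable b := ((measurable_deriv ψ).norm).pow_const 2
  have hap : ∀ w, a w ^ p = |f (ψ w)| ^ r := by
    intro w
    rw [ha, ← Real.rpow_mul (abs_nonneg _)]
    congr 1
    rw [hp]
    field_simp
  have hbq : ∀ w, b w ^ q = ‖deriv ψ w‖ ^ α := by
    intro w
    simp only [hb]
    rw [← Real.rpow_natCast ‖deriv ψ w‖ 2, ← Real.rpow_mul (norm_nonneg _)]
    congr 1
    rw [hq]
    push_cast
    ring
  have hpne0 : ENNReal.ofReal p ≠ 0 := by
    simp [ENNReal.ofReal_eq_zero, not_le, hppos]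
  have hqne0 : ENNReal.ofReal q ≠ 0 := by
    simp [ENNReal.ofReal_eq_zero, not_le, hqpos]
  have haInt : Integrable (fun w => ‖a w‖ ^ p) μ := by
    have h2 : (fun w => ‖a w‖ ^ p) = fun w => |f (ψ w)| ^ r := by
      funext w
      rw [Real.norm_eq_abs, abs_of_nonneg (Real.rpow_nonneg (abs_nonneg _) _), hap w]
    rw [h2]
    exact hInt2
  have hbInt : Integrable (fun w => ‖b w‖ ^ q) μ := by
    have h2 : (fun w => ‖b w‖ ^ q) = fun w => ‖deriv ψ w‖ ^ α := by
      funext w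
      rw [Real.norm_eq_abs, abs_of_nonneg (by positivity : (0:ℝ) ≤ b w), hbq w]
    rw [h2]
    exact hψα
  have haMem : MemLp a (ENNReal.ofReal p) μ := by
    have h := memLp_norm_rpow_iff (q := ENNReal.ofReal p) (p := ENNReal.ofReal p)
      ham.aestronglyMeasurable hpne0 ENNReal.ofReal_ne_top
    rw [ENNReal.toReal_ofReal hppos.le, ENNReal.div_self hpne0 ENNReal.ofReal_ne_top,
      memLp_one_iff_integrable] at h
    exact h.1 haInt
  have hbMem : MemLp b (ENNReal.ofReal q) μ := by
    have h := memLp_norm_rpow_iff (μ := μ) (q := ENNReal.ofReal q) (p := ENNReal.ofReal q)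
      hbm.aestronglyMeasurable hqne0 ENNReal.ofReal_ne_top
    rw [ENNReal.toReal_ofReal hqpos.le, ENNReal.div_self hqne0 ENNReal.ofReal_ne_top,
      memLp_one_iff_integrable] at h
    exact h.1 hbInt
  have holder := integral_mul_le_Lp_mul_Lq_of_nonneg (μ := μ) hpq
    (Filter.Eventually.of_forall fun w => Real.rpow_nonneg (abs_nonneg _) _)
    (Filter.Eventually.of_forall fun w => by positivity)
    haMem hbMem
  -- rewrite the three integrals in the Hölder inequality
  have hprod : ∫ w, a w * b w ∂μ = ∫ x in Ω, |f x| ^ s := by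
    rw [eq1]
    exact integral_congr_ae (Filter.Eventually.of_forall fun w => mul_comm _ _)
  have hBeq : ∫ w, a w ^ p ∂μ = ∫ x in Ω, |f x| ^ r * ‖deriv φ x‖ ^ 2 := by
    rw [eq2]
    exact integral_congr_ae (Filter.Eventually.of_forall hap)
  have hAeq : ∫ w, b w ^ q ∂μ = ∫ w in ball (0:ℂ) 1, ‖deriv ψ w‖ ^ α :=
    integral_congr_ae (Filter.Eventually.of_forall hbq)
  rw [hprod, hBeq, hAeq] at holder
  set A := ∫ w in ball (0:ℂ) 1, ‖deriv ψ w‖ ^ α with hA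
  set B := ∫ x in Ω, |f x| ^ r * ‖deriv φ x‖ ^ 2 with hB
  have hAnn : 0 ≤ A :=
    setIntegral_nonneg measurableSet_ball fun w _ => Real.rpow_nonneg (norm_nonneg _) _
  have hBnn : 0 ≤ B :=
    setIntegral_nonneg hΩopen.measurableSet fun x _ =>
      mul_nonneg (Real.rpow_nonneg (abs_nonneg _) _) (by positivity)
  have hI1nn : 0 ≤ ∫ x in Ω, |f x| ^ s :=
    setIntegral_nonneg hΩopen.measurableSet fun x _ => Real.rpow_nonneg (abs_nonneg _) _
  calc (∫ x in Ω, |f x| ^ s) ^ (1 / s)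
      ≤ (B ^ (1 / p) * A ^ (1 / q)) ^ (1 / s) :=
        Real.rpow_le_rpow hI1nn holder (by positivity)
    _ = B ^ (1 / p * (1 / s)) * A ^ (1 / q * (1 / s)) := by
        rw [Real.mul_rpow (Real.rpow_nonneg hBnn _) (Real.rpow_nonneg hAnn _),
          ← Real.rpow_mul hBnn, ← Real.rpow_mul hAnn]
    _ = A ^ (2 / α * (1 / s)) * B ^ (1 / r) := by
        rw [mul_comm]
        congr 1
        · congr 1
          rw [hq, one_div_div]
        · congr 1
          rw [hp, one_div_div]
          field_simp
end

section
/- Let ψ : 𝔻 → Ω be a conformal homeomorphism, 1 ≤ q < p < ∞, and suppose K := (∬_𝔻 |ψ'(u,v)|^{(p−2)q/(p−q)} dudv)^{(p−q)/(pq)} < ∞. Then for every f ∈ C¹(Ω) ∩ L^{1,p}(Ω), the composition g = f ∘ ψ satisfies ‖∇g‖_{L^q(𝔻)} ≤ K · ‖∇f‖_{L^p(Ω)}. -/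
open MeasureTheory Metric Set
open scoped ENNReal

/-- det of the real restriction of multiplication by `c : ℂ` is `normSq c`. -/
lemma det_smulRight_restrictScalars (c : ℂ) :
    (((1 : ℂ →L[ℂ] ℂ).smulRight c).restrictScalars ℝ).det = Complex.normSq c := by
  have h : ((((1 : ℂ →L[ℂ] ℂ).smulRight c).restrictScalars ℝ : ℂ →L[ℝ] ℂ) : ℂ →ₗ[ℝ] ℂ)
      = Algebra.lmul ℝ ℂ c := by
    apply LinearMap.ext
    intro z
    simp [mul_comm]
  show LinearMap.det _ = _
  rw [h, ← Algebra.norm_apply, Algebra.norm_complex_apply]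

/-- A nonnegative a.e.-measurable function whose `r`-th power is integrable is in `ℒ^r`. -/
lemma memLp_of_integrable_rpow {α : Type*} [MeasurableSpace α] {μ : Measure α}
    {h : α → ℝ} {r : ℝ} (hr : 0 < r) (hm : AEStronglyMeasurable h μ)
    (hnn : ∀ᵐ x ∂μ, 0 ≤ h x) (hint : Integrable (fun x => h x ^ r) μ) :
    MemLp h (ENNReal.ofReal r) μ := by
  have hne0 : ENNReal.ofReal r ≠ 0 := by simp [hr, hr.le, ENNReal.ofReal_eq_zero, not_le]
  have h1 : Integrable (fun x => ‖h x‖ ^ r) μ := by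
    refine hint.congr ?_
    filter_upwards [hnn] with x hx
    rw [Real.norm_of_nonneg hx]
  have h2 : MemLp (fun x => ‖h x‖ ^ (ENNReal.ofReal r).toReal) 1 μ := by
    rw [ENNReal.toReal_ofReal hr.le]
    exact memLp_one_iff_integrable.mpr h1
  have h3 : MemLp (fun x => ‖h x‖ ^ (ENNReal.ofReal r).toReal)
      (ENNReal.ofReal r / ENNReal.ofReal r) μ := by
    rwa [ENNReal.div_self hne0 ENNReal.ofReal_ne_top]
  exact (memLp_norm_rpow_iff hm hne0 ENNReal.ofReal_ne_top).mp h3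

/-- Composition operator on homogeneous Sobolev spaces induced by a conformal
map ψ : 𝔻 → Ω (Theorem 3.4): for 1 ≤ q < p < ∞ and
K = (∬_𝔻 |ψ'|^{(p−2)q/(p−q)})^{(p−q)/(pq)} < ∞ one has
‖∇(f∘ψ)‖_{L^q(𝔻)} ≤ K ‖∇f‖_{L^p(Ω)}. -/
theorem stmt15 (Ω : Set ℂ) (ψ : ℂ → ℂ)
    (hψd : DifferentiableOn ℂ ψ (ball (0:ℂ) 1))
    (hψbij : Set.BijOn ψ (ball (0:ℂ) 1) Ω)
    (p q : ℝ) (hq : 1 ≤ q) (hqp : q < p)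
    (K : ℝ)
    (hKdef : K = (∫ w in ball (0:ℂ) 1,
        ‖deriv ψ w‖ ^ ((p - 2) * q / (p - q))) ^ ((p - q) / (p * q)))
    (hKint : IntegrableOn
        (fun w => ‖deriv ψ w‖ ^ ((p - 2) * q / (p - q))) (ball (0:ℂ) 1))
    (f : ℂ → ℝ) (hf : ContDiffOn ℝ 1 f Ω)
    (hfp : IntegrableOn (fun x => ‖fderiv ℝ f x‖ ^ p) Ω) :
    (∫ w in ball (0:ℂ) 1, ‖fderiv ℝ (f ∘ ψ) w‖ ^ q) ^ (1 / q) ≤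
      K * (∫ x in Ω, ‖fderiv ℝ f x‖ ^ p) ^ (1 / p) := by
  have hq0 : (0:ℝ) < q := lt_of_lt_of_le zero_lt_one hq
  have hp0 : (0:ℝ) < p := lt_trans hq0 hqp
  have hpq0 : (0:ℝ) < p - q := sub_pos.mpr hqp
  have hqne : q ≠ 0 := ne_of_gt hq0
  have hpne : p ≠ 0 := ne_of_gt hp0
  have hpqne : p - q ≠ 0 := ne_of_gt hpq0
  set B : Set ℂ := ball (0:ℂ) 1 with hB
  have hBmeas : MeasurableSet B := measurableSet_ball
  have hBopen : IsOpen B := isOpen_ball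
  have hΩeq : ψ '' B = Ω := hψbij.image_eq
  -- Ω is open by the open mapping theorem
  have hΩopen : IsOpen Ω := by
    have hA : AnalyticOnNhd ℂ ψ B := hψd.analyticOnNhd hBopen
    rcases hA.is_constant_or_isOpen (convex_ball _ _).isPreconnected with ⟨w₀, hw⟩ | hopen
    · exfalso
      have h0 : (0:ℂ) ∈ B := by simp [hB]
      have h1 : (1/2 : ℂ) ∈ B := by
        simp only [hB, mem_ball, dist_zero_right]
        norm_num
      have := hψbij.injOn h0 h1 (by rw [hw 0 h0, hw _ h1])
      norm_num at this
    · rw [← hΩeq]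
      exact hopen B subset_rfl hBopen
  have hfd : ∀ x ∈ Ω, DifferentiableAt ℝ f x := fun x hx =>
    (hf.contDiffAt (hΩopen.mem_nhds hx)).differentiableAt one_ne_zero
  -- derivative data for ψ
  set F' : ℂ → ℂ →L[ℝ] ℂ :=
    fun w => ((1 : ℂ →L[ℂ] ℂ).smulRight (deriv ψ w)).restrictScalars ℝ with hF'def
  have hF' : ∀ w ∈ B, HasFDerivAt ψ (F' w) w := by
    intro w hw
    have hd : DifferentiableAt ℂ ψ w := hψd.differentiableAt (hBopen.mem_nhds hw)
    exact (hasDerivAt_iff_hasFDerivAt.mp hd.hasDerivAt).restrictScalars ℝ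
  have hdet : ∀ w, |(F' w).det| = ‖deriv ψ w‖ ^ (2:ℝ) := by
    intro w
    rw [hF'def, det_smulRight_restrictScalars,
      abs_of_nonneg (Complex.normSq_nonneg _),
      show (2:ℝ) = ((2:ℕ):ℝ) by norm_num, Real.rpow_natCast]
    rw [Complex.normSq_eq_norm_sq]
  have hnormF' : ∀ w, ‖F' w‖ = ‖deriv ψ w‖ := by
    intro w
    rw [hF'def]
    rw [ContinuousLinearMap.norm_restrictScalars,
      ContinuousLinearMap.norm_smulRight_apply, ContinuousLinearMap.one_def,
      ContinuousLinearMap.norm_id, one_mul]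
  -- change of variables
  have hCV : ∫ x in Ω, ‖fderiv ℝ f x‖ ^ p
      = ∫ w in B, ‖deriv ψ w‖ ^ (2:ℝ) * ‖fderiv ℝ f (ψ w)‖ ^ p := by
    rw [← hΩeq, integral_image_eq_integral_abs_det_fderiv_smul volume hBmeas
      (fun w hw => (hF' w hw).hasFDerivWithinAt) hψbij.injOn]
    refine integral_congr_ae (Filter.Eventually.of_forall fun w => ?_)
    simp only [smul_eq_mul, hdet]
  have hfunCV : (fun w => |(F' w).det| • ‖fderiv ℝ f (ψ w)‖ ^ p)
      = fun w => ‖deriv ψ w‖ ^ (2:ℝ) * ‖fderiv ℝ f (ψ w)‖ ^ p := by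
    funext w; simp only [smul_eq_mul]; rw [hdet w]
  have hIntCV : IntegrableOn
      (fun w => ‖deriv ψ w‖ ^ (2:ℝ) * ‖fderiv ℝ f (ψ w)‖ ^ p) B := by
    rw [← hfunCV]
    exact (integrableOn_image_iff_integrableOn_abs_det_fderiv_smul volume hBmeas
      (fun w hw => (hF' w hw).hasFDerivWithinAt) hψbij.injOn
      (fun x => ‖fderiv ℝ f x‖ ^ p)).mp (by rwa [hΩeq])
  -- measure and Hölder data
  set μ : Measure ℂ := volume.restrict B with hμ
  set a : ℂ → ℝ := fun w => ‖fderiv ℝ f (ψ w)‖ ^ q * ‖deriv ψ w‖ ^ (2*q/p) with ha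
  set b : ℂ → ℝ := fun w => ‖deriv ψ w‖ ^ (q - 2*q/p) with hb
  have hψm : AEMeasurable ψ μ := hψd.continuousOn.aemeasurable hBmeas
  have hDm : AEMeasurable (fun w => ‖fderiv ℝ f (ψ w)‖) μ :=
    ((measurable_fderiv ℝ f).norm).comp_aemeasurable hψm
  have hcm : Measurable fun w => ‖deriv ψ w‖ := (measurable_deriv ψ).norm
  have ham : AEStronglyMeasurable a μ :=
    ((hDm.pow aemeasurable_const).mul ((hcm.aemeasurable).pow aemeasurable_const)).aestronglyMeasurable
  have hbm : AEStronglyMeasurable b μ :=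
    ((hcm.aemeasurable).pow aemeasurable_const).aestronglyMeasurable
  have hann : ∀ w, 0 ≤ a w := fun w =>
    mul_nonneg (Real.rpow_nonneg (norm_nonneg _) _) (Real.rpow_nonneg (norm_nonneg _) _)
  have hbnn : ∀ w, 0 ≤ b w := fun w => Real.rpow_nonneg (norm_nonneg _) _
  -- integrability of a^(p/q)
  have ha_pow : (fun w => a w ^ (p/q))
      = fun w => ‖deriv ψ w‖ ^ (2:ℝ) * ‖fderiv ℝ f (ψ w)‖ ^ p := by
    funext w
    rw [ha]
    rw [Real.mul_rpow (Real.rpow_nonneg (norm_nonneg _) _) (Real.rpow_nonneg (norm_nonneg _) _),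
      ← Real.rpow_mul (norm_nonneg _), ← Real.rpow_mul (norm_nonneg _)]
    rw [show q * (p/q) = p by field_simp <;> ring, show 2*q/p * (p/q) = 2 by field_simp <;> ring]
    ring
  have ha_int : Integrable (fun w => a w ^ (p/q)) μ := by
    rw [ha_pow]; exact hIntCV
  have hb_pow : (fun w => b w ^ (p/(p-q)))
      = fun w => ‖deriv ψ w‖ ^ ((p - 2) * q / (p - q)) := by
    funext w
    rw [hb, ← Real.rpow_mul (norm_nonneg _)]
    congr 1
    field_simp
  have hb_int : Integrable (fun w => b w ^ (p/(p-q))) μ := by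
    rw [hb_pow]; exact hKint
  have ha_mem : MemLp a (ENNReal.ofReal (p/q)) μ :=
    memLp_of_integrable_rpow (div_pos hp0 hq0) ham
      (Filter.Eventually.of_forall hann) ha_int
  have hb_mem : MemLp b (ENNReal.ofReal (p/(p-q))) μ :=
    memLp_of_integrable_rpow (div_pos hp0 hpq0) hbm
      (Filter.Eventually.of_forall hbnn) hb_int
  have hconj : Real.HolderConjugate (p/q) (p/(p-q)) := by
    rw [Real.holderConjugate_iff]
    constructor
    · exact (one_lt_div hq0).mpr hqp
    · rw [inv_div, inv_div]
      field_simp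
      ring
  -- Hölder's inequality
  have hHolder : ∫ w, a w * b w ∂μ ≤
      (∫ w, a w ^ (p/q) ∂μ) ^ (1/(p/q)) * (∫ w, b w ^ (p/(p-q)) ∂μ) ^ (1/(p/(p-q))) :=
    integral_mul_le_Lp_mul_Lq_of_nonneg hconj
      (Filter.Eventually.of_forall hann) (Filter.Eventually.of_forall hbnn) ha_mem hb_mem
  -- the product a * b
  have hab_eq : ∀ w, a w * b w = ‖fderiv ℝ f (ψ w)‖ ^ q * ‖deriv ψ w‖ ^ q := by
    intro w
    rw [ha, hb, mul_assoc, ← Real.rpow_add' (norm_nonneg _) (by rw [show 2*q/p + (q - 2*q/p) = q by ring]; exact hqne)]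
    rw [show 2*q/p + (q - 2*q/p) = q by ring]
  -- integrability of the product
  have hab_int : Integrable (fun w => a w * b w) μ := by
    have h1 : (1 : ℝ≥0∞) / 1 = 1 / ENNReal.ofReal (p/(p-q)) + 1 / ENNReal.ofReal (p/q) := by
      rw [one_div, one_div, one_div, ← ENNReal.ofReal_inv_of_pos (div_pos hp0 hpq0),
        ← ENNReal.ofReal_inv_of_pos (div_pos hp0 hq0), inv_one,
        ← ENNReal.ofReal_add (by positivity) (by positivity)]
      rw [inv_div, inv_div, show (p-q)/p + q/p = 1 by field_simp <;> ring, ENNReal.ofReal_one]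
    have := (ha_mem.smul hb_mem (hpqr := ⟨by simpa only [one_div] using h1.symm⟩) : MemLp (b • a) 1 μ)
    rw [memLp_one_iff_integrable] at this
    refine this.congr (Filter.Eventually.of_forall fun w => ?_)
    simp [Pi.smul_apply, smul_eq_mul, mul_comm]
  -- pointwise bound for the gradient of the composition
  have hcomp : ∀ w ∈ B, ‖fderiv ℝ (f ∘ ψ) w‖ ≤ ‖fderiv ℝ f (ψ w)‖ * ‖deriv ψ w‖ := by
    intro w hw
    have hψw : HasFDerivAt ψ (F' w) w := hF' w hw
    have hfw : DifferentiableAt ℝ f (ψ w) := hfd (ψ w) (hΩeq ▸ mem_image_of_mem ψ hw)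
    have hc : HasFDerivAt (f ∘ ψ) ((fderiv ℝ f (ψ w)).comp (F' w)) w :=
      hfw.hasFDerivAt.comp w hψw
    rw [hc.fderiv]
    calc ‖(fderiv ℝ f (ψ w)).comp (F' w)‖ ≤ ‖fderiv ℝ f (ψ w)‖ * ‖F' w‖ :=
          ContinuousLinearMap.opNorm_comp_le _ _
      _ = ‖fderiv ℝ f (ψ w)‖ * ‖deriv ψ w‖ := by rw [hnormF' w]
  -- integrability of LHS integrand
  have hLHSm : AEStronglyMeasurable (fun w => ‖fderiv ℝ (f ∘ ψ) w‖ ^ q) μ :=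
    (((measurable_fderiv ℝ (f ∘ ψ)).norm).aemeasurable.pow aemeasurable_const).aestronglyMeasurable
  have hptwise : ∀ᵐ w ∂μ, ‖fderiv ℝ (f ∘ ψ) w‖ ^ q ≤ a w * b w := by
    filter_upwards [ae_restrict_mem hBmeas] with w hw
    rw [hab_eq w, ← Real.mul_rpow (norm_nonneg _) (norm_nonneg _)]
    exact Real.rpow_le_rpow (norm_nonneg _) (hcomp w hw) hq0.le
  have hLHS_int : Integrable (fun w => ‖fderiv ℝ (f ∘ ψ) w‖ ^ q) μ := by
    refine hab_int.mono' hLHSm ?_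
    filter_upwards [hptwise] with w hw
    rw [Real.norm_of_nonneg (Real.rpow_nonneg (norm_nonneg _) _)]
    exact hw
  have hmono : ∫ w, ‖fderiv ℝ (f ∘ ψ) w‖ ^ q ∂μ ≤ ∫ w, a w * b w ∂μ :=
    integral_mono_ae hLHS_int hab_int hptwise
  -- put everything together
  set I : ℝ := ∫ x in Ω, ‖fderiv ℝ f x‖ ^ p with hI
  set J : ℝ := ∫ w in B, ‖deriv ψ w‖ ^ ((p - 2) * q / (p - q)) with hJ
  have hInn : 0 ≤ I := setIntegral_nonneg (hΩopen.measurableSet)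
    (fun x _ => Real.rpow_nonneg (norm_nonneg _) _)
  have hJnn : 0 ≤ J := setIntegral_nonneg hBmeas
    (fun x _ => Real.rpow_nonneg (norm_nonneg _) _)
  have hIa : ∫ w, a w ^ (p/q) ∂μ = I := by
    rw [ha_pow, hCV]
  have hJb : ∫ w, b w ^ (p/(p-q)) ∂μ = J := by rw [hb_pow]
  have habnn : 0 ≤ ∫ w, a w * b w ∂μ :=
    integral_nonneg fun w => mul_nonneg (hann w) (hbnn w)
  have hchain : (∫ w in B, ‖fderiv ℝ (f ∘ ψ) w‖ ^ q) ^ (1/q)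
      ≤ (I ^ (q/p) * J ^ ((p-q)/p)) ^ (1/q) := by
    refine Real.rpow_le_rpow (integral_nonneg fun w => Real.rpow_nonneg (norm_nonneg _) _)
      ?_ (by positivity)
    calc ∫ w in B, ‖fderiv ℝ (f ∘ ψ) w‖ ^ q ≤ ∫ w, a w * b w ∂μ := hmono
      _ ≤ (∫ w, a w ^ (p/q) ∂μ) ^ (1/(p/q)) * (∫ w, b w ^ (p/(p-q)) ∂μ) ^ (1/(p/(p-q))) :=
          hHolder
      _ = I ^ (q/p) * J ^ ((p-q)/p) := by
          rw [hIa, hJb, one_div_div, one_div_div]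
  have hfinal : (I ^ (q/p) * J ^ ((p-q)/p)) ^ (1/q) = K * I ^ (1/p) := by
    rw [Real.mul_rpow (Real.rpow_nonneg hInn _) (Real.rpow_nonneg hJnn _),
      ← Real.rpow_mul hInn, ← Real.rpow_mul hJnn,
      show q/p * (1/q) = 1/p by field_simp <;> ring,
      show (p-q)/p * (1/q) = (p-q)/(p*q) by field_simp <;> ring, hKdef]
    ring
  calc (∫ w in ball (0:ℂ) 1, ‖fderiv ℝ (f ∘ ψ) w‖ ^ q) ^ (1/q)
      ≤ (I ^ (q/p) * J ^ ((p-q)/p)) ^ (1/q) := hchain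
    _ = K * I ^ (1/p) := hfinal
end
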